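/- For effects a, b on a finite-dimensional Hilbert space, a^{1/2} b a^{1/2} = b^{1/2} a b^{1/2} holds if and only if ab = ba. Consequently, Bayes' quantum second rule holds relative to the Lüders operations 𝓛^(a), 𝓛^(b) for all states if and only if a and b commute. -/

import Mathlib

open scoped ComplexOrder

open Matrix BigOperators

/-- The positive semidefinite square root of a positive semidefinite matrix
(the definition `Matrix.PosSemidef.sqrt` of the older Mathlib, since removed). -/
noncomputable def Matrix.PosSemidef.sqrt {n : Type*} [Fintype n] [DecidableEq n]
    {A : Matrix n n ℂ} (hA : A.PosSemidef) : Matrix n n ℂ :=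
  hA.1.eigenvectorUnitary.1 * diagonal ((↑) ∘ (√·) ∘ hA.1.eigenvalues) *
  (star hA.1.eigenvectorUnitary : Matrix n n ℂ)

/-- A state: positive operator of trace one. -/
def IsState {n : ℕ} (ρ : Matrix (Fin n) (Fin n) ℂ) : Prop :=
  ρ.PosSemidef ∧ ρ.trace = 1

lemma Matrix.PosSemidef.posSemidef_sqrt {n : Type*} [Fintype n] [DecidableEq n]
    {A : Matrix n n ℂ} (hA : A.PosSemidef) : hA.sqrt.PosSemidef := by
  unfold Matrix.PosSemidef.sqrt
  have hU : (star hA.1.eigenvectorUnitary : Matrix n n ℂ) = (hA.1.eigenvectorUnitary.1)ᴴ := rfl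
  rw [hU]
  refine Matrix.PosSemidef.mul_mul_conjTranspose_same (Matrix.PosSemidef.diagonal ?_) _
  intro i
  simp only [Function.comp_apply, Pi.zero_apply]
  exact Complex.zero_le_real.mpr (Real.sqrt_nonneg _)

lemma Matrix.PosSemidef.sqrt_mul_self {n : Type*} [Fintype n] [DecidableEq n]
    {A : Matrix n n ℂ} (hA : A.PosSemidef) : hA.sqrt * hA.sqrt = A := by
  unfold Matrix.PosSemidef.sqrt
  set U := hA.1.eigenvectorUnitary
  have hUU : (star U : Matrix n n ℂ) * U.1 = 1 := Unitary.coe_star_mul_self U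
  conv_rhs => rw [hA.1.spectral_theorem, Unitary.conjStarAlgAut_apply]
  simp only [mul_assoc]
  rw [← mul_assoc (star U : Matrix n n ℂ) U.1, hUU, one_mul, ← mul_assoc (diagonal _), diagonal_mul_diagonal]
  congr 3
  funext i
  simp only [Function.comp_apply]
  rw [← Complex.ofReal_mul, Real.mul_self_sqrt (hA.eigenvalues_nonneg i)]
  rfl


lemma frob {n : ℕ} {M : Matrix (Fin n) (Fin n) ℂ}
    (h : (Mᴴ * M).trace = 0) : M = 0 := by
  have key : ((∑ j, ∑ i, Complex.normSq (M i j) : ℝ) : ℂ) = 0 := by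
    rw [← h]
    simp only [Matrix.trace, Matrix.diag, Matrix.mul_apply, Matrix.conjTranspose_apply]
    push_cast
    refine (Finset.sum_congr rfl fun j _ => Finset.sum_congr rfl fun i _ => ?_).symm
    rw [Complex.star_def, ← Complex.normSq_eq_conj_mul_self]
  rw [Complex.ofReal_eq_zero] at key
  have h3 := (Finset.sum_eq_zero_iff_of_nonneg
    (fun j _ => Finset.sum_nonneg fun i _ => Complex.normSq_nonneg _)).mp key
  ext i j
  have h4 := (Finset.sum_eq_zero_iff_of_nonneg
    (fun i _ => Complex.normSq_nonneg _)).mp (h3 j (Finset.mem_univ _)) i (Finset.mem_univ _)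
  simpa using Complex.normSq_eq_zero.mp h4

lemma sqrt_comm {n : ℕ} {a b : Matrix (Fin n) (Fin n) ℂ}
    (ha : a.PosSemidef) (hb : b.IsHermitian) (h : a * b = b * a) :
    ha.sqrt * b = b * ha.sqrt := by
  set S := ha.sqrt with hSdef
  have hS : S.PosSemidef := ha.posSemidef_sqrt
  have hSS : S * S = a := ha.sqrt_mul_self
  have hSH : Sᴴ = S := hS.1
  set C := S * b - b * S with hC
  have hanti : S * C = -(C * S) := by
    have e1 : S * C = a * b - S * b * S := by
      rw [hC, mul_sub, ← mul_assoc, hSS, mul_assoc]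
    have e2 : C * S = S * b * S - b * a := by
      rw [hC, sub_mul, mul_assoc b S S, hSS]
    rw [e1, e2, h, neg_sub]
  have hCH : Cᴴ = -C := by
    rw [hC, conjTranspose_sub, conjTranspose_mul, conjTranspose_mul, hSH, hb.eq, neg_sub]
  have tSCC : (S * (C * C)).trace = 0 := by
    have h1 : (S * (C * C)).trace = -((S * (C * C)).trace) := by
      calc (S * (C * C)).trace = ((S * C) * C).trace := by rw [mul_assoc]
        _ = (C * (S * C)).trace := by rw [Matrix.trace_mul_comm]
        _ = (C * -(C * S)).trace := by rw [hanti]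
        _ = -(((C * C) * S).trace) := by rw [mul_neg, trace_neg, ← mul_assoc]
        _ = -((S * (C * C)).trace) := by rw [Matrix.trace_mul_comm]
    exact add_self_eq_zero.mp (by linear_combination h1)
  have hRC : hS.sqrt * C = 0 := by
    apply frob
    have e : (hS.sqrt * C)ᴴ * (hS.sqrt * C) = -(C * (S * C)) := by
      rw [conjTranspose_mul, hS.posSemidef_sqrt.1, hCH]
      simp only [neg_mul]
      rw [mul_assoc C, ← mul_assoc hS.sqrt hS.sqrt C, hS.sqrt_mul_self]
    rw [e, trace_neg, Matrix.trace_mul_comm, mul_assoc, tSCC, neg_zero]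
  have hSC : S * C = 0 := by
    rw [← hS.sqrt_mul_self, mul_assoc, hRC, mul_zero]
  have hSbS : S * b * S = a * b := by
    have h2 := hSC
    rw [hC, mul_sub, ← mul_assoc, hSS, ← mul_assoc, sub_eq_zero] at h2
    exact h2.symm
  have tCC : (C * C).trace = 0 := by
    have expand : C * C = S*b*(S*b) - S*b*(b*S) - b*S*(S*b) + b*S*(b*S) := by
      rw [hC]; noncomm_ring
    have m1 : S*b*(S*b) = a*b*b := by
      calc S*b*(S*b) = S*b*S*b := by noncomm_ring
      _ = a*b*b := by rw [hSbS]
    have m3 : b*S*(S*b) = b*(a*b) := by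
      calc b*S*(S*b) = b*(S*S)*b := by noncomm_ring
      _ = b*(a*b) := by rw [hSS]; noncomm_ring
    have m4 : b*S*(b*S) = b*(a*b) := by
      calc b*S*(b*S) = b*(S*b*S) := by noncomm_ring
      _ = b*(a*b) := by rw [hSbS]
    have t3 : (b*(a*b)).trace = (a*b*b).trace := by
      rw [Matrix.trace_mul_comm b (a*b)]
    have t2 : (S*b*(b*S)).trace = (a*b*b).trace := by
      rw [Matrix.trace_mul_comm (S*b) (b*S), m3]; exact t3
    rw [expand, trace_add, trace_sub, trace_sub, m1, t2, m3, m4, t3]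
    ring
  have hC0 : C = 0 := by
    apply frob
    rw [hCH, neg_mul, trace_neg, tCC, neg_zero]
  rw [hC] at hC0
  exact sub_eq_zero.mp hC0

lemma comm_of_normal_cstar {𝔸 : Type*} [CStarAlgebra 𝔸] {u y c : 𝔸}
    (hu : IsSelfAdjoint u) (hy : IsSelfAdjoint y) (hcsa : IsSelfAdjoint c)
    (hcc : c * c = u)
    (h : u * (y * y) * u = y * (u * u) * y) :
    u * y = y * u := by
  set N := u * y with hN
  have hstarN : star N = y * u := by
    rw [hN, StarMul.star_mul, hu.star_eq, hy.star_eq]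
  have hnormal : IsStarNormal N := by
    refine ⟨?_⟩
    show star N * N = N * star N
    rw [hstarN, hN]
    calc (y * u) * (u * y) = y * (u * u) * y := by noncomm_ring
      _ = u * (y * y) * u := h.symm
      _ = (u * y) * (y * u) := by noncomm_ring
  have hmsa : IsSelfAdjoint (c * y * c) := by
    rw [_root_.IsSelfAdjoint, StarMul.star_mul, StarMul.star_mul, hcsa.star_eq, hy.star_eq, mul_assoc]
  have hspec : spectrum ℂ N ⊆ Set.range (algebraMap ℝ ℂ) := by
    intro z hz
    by_cases hz0 : z = 0
    · exact ⟨0, by simp [hz0]⟩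
    · have hN2 : N = c * (c * y) := by rw [hN, ← hcc, mul_assoc]
      have h1 : z ∈ spectrum ℂ (c * (c * y)) \ {0} := ⟨by rwa [← hN2], hz0⟩
      rw [spectrum.nonzero_mul_comm] at h1
      have h2 : z ∈ spectrum ℂ (c * y * c) := h1.1
      rw [← hmsa.spectrumRestricts.algebraMap_image] at h2
      obtain ⟨r, -, hr⟩ := h2
      exact ⟨r, hr⟩
  have hres : SpectrumRestricts N Complex.reCLM :=
    SpectrumRestricts.of_subset_range_algebraMap (fun r => Complex.ofReal_re r) hspec
  have hNsa : IsSelfAdjoint N :=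
    isSelfAdjoint_iff_isStarNormal_and_quasispectrumRestricts.mpr ⟨hnormal, quasispectrumRestricts_iff_spectrumRestricts.mpr hres⟩
  calc u * y = star N := by rw [hNsa.star_eq]
    _ = y * u := hstarN

lemma comm_of_eq {n : ℕ} {a b : Matrix (Fin n) (Fin n) ℂ}
    (ha : a.PosSemidef) (hb : b.PosSemidef)
    (h : ha.sqrt * b * ha.sqrt = hb.sqrt * a * hb.sqrt) : a * b = b * a := by
  have hA : (ha.sqrt).PosSemidef := ha.posSemidef_sqrt
  have hB : (hb.sqrt).PosSemidef := hb.posSemidef_sqrt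
  have hAA : ha.sqrt * ha.sqrt = a := ha.sqrt_mul_self
  have hBB : hb.sqrt * hb.sqrt = b := hb.sqrt_mul_self
  let φ := Matrix.toEuclideanCLM (n := Fin n) (𝕜 := ℂ)
  have sa : ∀ (M : Matrix (Fin n) (Fin n) ℂ), M.IsHermitian → IsSelfAdjoint (φ M) := by
    intro M hM
    rw [_root_.IsSelfAdjoint, ← map_star]
    exact congrArg φ hM
  have hmain : φ (ha.sqrt) * (φ (hb.sqrt) * φ (hb.sqrt)) * φ (ha.sqrt) =
      φ (hb.sqrt) * (φ (ha.sqrt) * φ (ha.sqrt)) * φ (hb.sqrt) := by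
    simp only [← _root_.map_mul]
    exact congrArg φ (by rw [hAA, hBB]; exact h)
  have key := comm_of_normal_cstar (sa _ hA.1) (sa _ hB.1)
    (sa _ hA.posSemidef_sqrt.1) (by rw [← _root_.map_mul]; exact congrArg φ hA.sqrt_mul_self)
    hmain
  have hABBA : ha.sqrt * hb.sqrt = hb.sqrt * ha.sqrt := by
    apply φ.injective
    rw [_root_.map_mul, _root_.map_mul]
    exact key
  have hcomm : Commute (ha.sqrt) (hb.sqrt) := hABBA
  have h2 : Commute (ha.sqrt * ha.sqrt) (hb.sqrt * hb.sqrt) :=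
    (hcomm.mul_right hcomm).mul_left (hcomm.mul_right hcomm)
  rw [← hAA, ← hBB]
  exact h2

lemma eq_zero_of_quadratic {n : ℕ} {M : Matrix (Fin n) (Fin n) ℂ}
    (h : ∀ v : Fin n → ℂ, star v ⬝ᵥ M *ᵥ v = 0) : M = 0 := by
  have hT : ∀ x : EuclideanSpace ℂ (Fin n), @inner ℂ _ _ ((Matrix.toEuclideanLin M) x) x = 0 := by
    intro x
    rw [← inner_conj_symm]
    have hx : @inner ℂ _ _ x ((Matrix.toEuclideanLin M) x) = star (x : Fin n → ℂ) ⬝ᵥ M *ᵥ (x : Fin n → ℂ) := by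
      simp [PiLp.inner_apply, Matrix.toEuclideanLin_apply, dotProduct, RCLike.inner_apply,
        mulVec]
      exact Finset.sum_congr rfl fun _ _ => mul_comm _ _
    rw [hx, h, map_zero]
  have := (inner_map_self_eq_zero (Matrix.toEuclideanLin M : _ →ₗ[ℂ] _)).mp hT
  exact (LinearEquiv.map_eq_zero_iff _).mp this

lemma state_outer {n : ℕ} (w : Fin n → ℂ) (hw : w ≠ 0) :
    ∃ ρ : Matrix (Fin n) (Fin n) ℂ, IsState ρ ∧ ∃ t : ℂ, t ≠ 0 ∧
      ∀ M : Matrix (Fin n) (Fin n) ℂ, (ρ * M).trace = t * (star w ⬝ᵥ M *ᵥ w) := by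
  classical
  set r : ℝ := ∑ i, Complex.normSq (w i) with hr
  have hrpos : 0 < r := by
    obtain ⟨i, hi⟩ := Function.ne_iff.mp hw
    exact Finset.sum_pos' (fun j _ => Complex.normSq_nonneg _)
      ⟨i, Finset.mem_univ i, Complex.normSq_pos.mpr hi⟩
  set P : Matrix (Fin n) (Fin n) ℂ := vecMulVec w (star w) with hP
  have htrP : ∀ M : Matrix (Fin n) (Fin n) ℂ, (P * M).trace = star w ⬝ᵥ M *ᵥ w := by
    intro M
    simp only [Matrix.trace, Matrix.diag, Matrix.mul_apply, hP, vecMulVec_apply,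
      dotProduct, Matrix.mulVec, Pi.star_apply]
    rw [Finset.sum_comm]
    refine Finset.sum_congr rfl fun j _ => ?_
    rw [Finset.mul_sum]
    refine Finset.sum_congr rfl fun i _ => ?_
    ring
  have hmv : ∀ x : Fin n → ℂ, P *ᵥ x = (star w ⬝ᵥ x) • w := by
    intro x
    funext i
    simp only [Matrix.mulVec, hP, vecMulVec_apply, dotProduct, Pi.smul_apply,
      Pi.star_apply, smul_eq_mul]
    rw [Finset.sum_mul]
    exact Finset.sum_congr rfl fun j _ => by ring
  have hform : ∀ x : Fin n → ℂ, star x ⬝ᵥ P *ᵥ x = (Complex.normSq (star w ⬝ᵥ x) : ℂ) := by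
    intro x
    rw [hmv x, dotProduct_smul, smul_eq_mul, Matrix.star_dotProduct]
    simp [Complex.star_def, Complex.normSq_conj, ← Complex.normSq_eq_conj_mul_self]
  have hPherm : P.IsHermitian := by
    ext i j
    simp only [Matrix.conjTranspose_apply, hP, vecMulVec_apply, Pi.star_apply]
    rw [StarMul.star_mul, star_star]
  have hPpsd : P.PosSemidef := by
    refine Matrix.PosSemidef.of_dotProduct_mulVec_nonneg hPherm fun x => ?_
    rw [hform x]
    exact_mod_cast Complex.zero_le_real.mpr (Complex.normSq_nonneg _)
  have htraceP : P.trace = (r : ℂ) := by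
    simp only [Matrix.trace, Matrix.diag, hP, vecMulVec_apply, Pi.star_apply, hr]
    push_cast
    exact Finset.sum_congr rfl fun i _ => by
      rw [Complex.star_def, mul_comm, ← Complex.normSq_eq_conj_mul_self]
  have hrne : (r : ℂ) ≠ 0 := by exact_mod_cast hrpos.ne'
  refine ⟨((r : ℂ))⁻¹ • P, ⟨Matrix.PosSemidef.of_dotProduct_mulVec_nonneg ?_ fun x => ?_, ?_⟩, ((r : ℂ))⁻¹, inv_ne_zero hrne, fun M => ?_⟩
  · show (((r : ℂ))⁻¹ • P)ᴴ = ((r : ℂ))⁻¹ • P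
    rw [Matrix.conjTranspose_smul, hPherm.eq]
    congr 1
    rw [← Complex.ofReal_inv, Complex.star_def, Complex.conj_ofReal]
  · rw [Matrix.smul_mulVec, dotProduct_smul, hform x, smul_eq_mul,
      ← Complex.ofReal_inv, ← Complex.ofReal_mul]
    exact_mod_cast Complex.zero_le_real.mpr (mul_nonneg (inv_nonneg.mpr hrpos.le)
      (Complex.normSq_nonneg _))
  · rw [Matrix.trace_smul, htraceP, smul_eq_mul, inv_mul_cancel₀ hrne]
  · rw [Matrix.smul_mul, Matrix.trace_smul, htrP M, smul_eq_mul]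

open Polynomial in
lemma quad_vanish {n : ℕ} {M : Matrix (Fin n) (Fin n) ℂ} {u v : Fin n → ℂ} {S : Set ℝ}
    (hS : S.Finite)
    (h : ∀ t : ℝ, t ∉ S → star (u + (t : ℂ) • v) ⬝ᵥ M *ᵥ (u + (t : ℂ) • v) = 0) :
    star v ⬝ᵥ M *ᵥ v = 0 := by
  set p : ℂ[X] := C (star u ⬝ᵥ M *ᵥ u) + C (star u ⬝ᵥ M *ᵥ v + star v ⬝ᵥ M *ᵥ u) * X +
    C (star v ⬝ᵥ M *ᵥ v) * X ^ 2 with hp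
  have heval : ∀ t : ℝ, p.eval (t : ℂ) = star (u + (t : ℂ) • v) ⬝ᵥ M *ᵥ (u + (t : ℂ) • v) := by
    intro t
    simp only [hp, eval_add, eval_mul, eval_pow, eval_C, eval_X, star_add, star_smul,
      Matrix.mulVec_add, Matrix.mulVec_smul, add_dotProduct, smul_dotProduct,
      dotProduct_add, dotProduct_smul, smul_eq_mul, Complex.star_def,
      Complex.conj_ofReal]
    ring
  have hzero : p = 0 := by
    apply Polynomial.eq_zero_of_infinite_isRoot
    have hsub : (fun t : ℝ => (t : ℂ)) '' Sᶜ ⊆ {x | p.IsRoot x} := by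
      rintro - ⟨t, ht, rfl⟩
      exact (heval t).trans (h t ht)
    exact Set.Infinite.mono hsub ((hS.infinite_compl).image
      (Complex.ofReal_injective.injOn))
  have : p.coeff 2 = star v ⬝ᵥ M *ᵥ v := by
    simp [hp, coeff_add, coeff_C, coeff_C_mul, coeff_X_pow]
  rw [← this, hzero, coeff_zero]

/-- for effects `a, b`, `a^{1/2} b a^{1/2} = b^{1/2} a b^{1/2}` holds iff
`ab = ba`; consequently Bayes' quantum second rule holds relative to the Lüders
operations `𝓛^(a)`, `𝓛^(b)` (so `P_ρ(b|a) = tr(ρ a^{1/2} b a^{1/2})/tr(ρa)`) for all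
states iff `a` and `b` commute. -/

theorem luders_bayes_iff_commute {n : ℕ}
    (a b : Matrix (Fin n) (Fin n) ℂ)
    (ha : a.PosSemidef) (ha' : (1 - a).PosSemidef)
    (hb : b.PosSemidef) (hb' : (1 - b).PosSemidef) :
    (ha.sqrt * b * ha.sqrt = hb.sqrt * a * hb.sqrt ↔ a * b = b * a) ∧
    ((∀ ρ : Matrix (Fin n) (Fin n) ℂ, IsState ρ →
        (ρ * a).trace ≠ 0 → (ρ * b).trace ≠ 0 →
        (ρ * (ha.sqrt * b * ha.sqrt)).trace / (ρ * a).trace =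
          ((ρ * b).trace / (ρ * a).trace) *
            ((ρ * (hb.sqrt * a * hb.sqrt)).trace / (ρ * b).trace))
      ↔ a * b = b * a) := by
  have iff1 : ha.sqrt * b * ha.sqrt = hb.sqrt * a * hb.sqrt ↔ a * b = b * a := by
    constructor
    · exact comm_of_eq ha hb
    · intro hcomm
      have h1 : ha.sqrt * b = b * ha.sqrt := sqrt_comm ha hb.1 hcomm
      have h2 : hb.sqrt * a = a * hb.sqrt := sqrt_comm hb ha.1 hcomm.symm
      rw [h1, h2, mul_assoc, ha.sqrt_mul_self, mul_assoc, hb.sqrt_mul_self, hcomm]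
  refine ⟨iff1, ⟨fun hyp => ?_, fun hcomm ρ hρ hTa hTb => ?_⟩⟩
  · -- the hard direction of the second equivalence
    by_cases ha0 : a = 0
    · simp [ha0]
    by_cases hb0 : b = 0
    · simp [hb0]
    have hex : ∀ (M : Matrix (Fin n) (Fin n) ℂ), M ≠ 0 → ∃ u, M *ᵥ u ≠ 0 := by
      intro M hM
      by_contra hcon
      push_neg at hcon
      apply hM
      ext i j
      have := congrFun (hcon (Pi.single j 1)) i
      simpa [Matrix.mulVec_single] using this
    obtain ⟨u₁, hu₁⟩ := hex a ha0
    obtain ⟨u₂, hu₂⟩ := hex b hb0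
    obtain ⟨u, hua, hub⟩ : ∃ u, a *ᵥ u ≠ 0 ∧ b *ᵥ u ≠ 0 := by
      by_cases h1 : b *ᵥ u₁ ≠ 0
      · exact ⟨u₁, hu₁, h1⟩
      by_cases h2 : a *ᵥ u₂ ≠ 0
      · exact ⟨u₂, h2, hu₂⟩
      push_neg at h1 h2
      refine ⟨u₁ + u₂, ?_, ?_⟩
      · rwa [Matrix.mulVec_add, h2, add_zero]
      · rwa [Matrix.mulVec_add, h1, zero_add]
    set Δ : Matrix (Fin n) (Fin n) ℂ :=
      ha.sqrt * b * ha.sqrt - hb.sqrt * a * hb.sqrt with hΔ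
    have hkey : ∀ w : Fin n → ℂ, a *ᵥ w ≠ 0 → b *ᵥ w ≠ 0 → star w ⬝ᵥ Δ *ᵥ w = 0 := by
      intro w hwa hwb
      have hw0 : w ≠ 0 := fun h0 => hwa (by rw [h0, Matrix.mulVec_zero])
      obtain ⟨ρ, hρ, t, ht, htr⟩ := state_outer w hw0
      have hTa : (ρ * a).trace ≠ 0 := by
        rw [htr]
        exact mul_ne_zero ht fun hz => hwa ((ha.dotProduct_mulVec_zero_iff w).mp hz)
      have hTb : (ρ * b).trace ≠ 0 := by
        rw [htr]
        exact mul_ne_zero ht fun hz => hwb ((hb.dotProduct_mulVec_zero_iff w).mp hz)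
      have hbayes := hyp ρ hρ hTa hTb
      have h2 : ((ρ * b).trace / (ρ * a).trace) *
          ((ρ * (hb.sqrt * a * hb.sqrt)).trace / (ρ * b).trace)
          = (ρ * (hb.sqrt * a * hb.sqrt)).trace / (ρ * a).trace := by
        field_simp
      rw [h2] at hbayes
      have hXY : (ρ * (ha.sqrt * b * ha.sqrt)).trace
          = (ρ * (hb.sqrt * a * hb.sqrt)).trace := by
        have := congrArg (· * (ρ * a).trace) hbayes
        simpa [div_mul_cancel₀, hTa] using this
      rw [htr, htr] at hXY
      have hdot : star w ⬝ᵥ (ha.sqrt * b * ha.sqrt) *ᵥ w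
          = star w ⬝ᵥ (hb.sqrt * a * hb.sqrt) *ᵥ w := mul_left_cancel₀ ht hXY
      rw [hΔ, Matrix.sub_mulVec, dotProduct_sub, hdot, sub_self]
    have hall : ∀ v : Fin n → ℂ, star v ⬝ᵥ Δ *ᵥ v = 0 := by
      intro v
      have hSfin : ∀ (M : Matrix (Fin n) (Fin n) ℂ), M *ᵥ u ≠ 0 →
          {t : ℝ | M *ᵥ (u + (t : ℂ) • v) = 0}.Subsingleton := by
        intro M hMu t1 ht1 t2 ht2
        simp only [Set.mem_setOf_eq, Matrix.mulVec_add, Matrix.mulVec_smul] at ht1 ht2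
        by_cases hMv : M *ᵥ v = 0
        · exact absurd (by rwa [hMv, smul_zero, add_zero] at ht1) hMu
        · have heq : (t1 : ℂ) • (M *ᵥ v) = (t2 : ℂ) • (M *ᵥ v) :=
            add_left_cancel (ht1.trans ht2.symm)
          have hsub : ((t1 : ℂ) - t2) • (M *ᵥ v) = 0 := by
            rw [sub_smul, heq, sub_self]
          rcases smul_eq_zero.mp hsub with hc | hc
          · exact_mod_cast sub_eq_zero.mp hc
          · exact absurd hc hMv
      have hfin : ({t : ℝ | a *ᵥ (u + (t : ℂ) • v) = 0} ∪
          {t : ℝ | b *ᵥ (u + (t : ℂ) • v) = 0}).Finite :=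
        ((hSfin a hua).finite).union ((hSfin b hub).finite)
      refine quad_vanish (u := u) (v := v) hfin fun t htS => ?_
      rw [Set.mem_union] at htS
      push_neg at htS
      exact hkey _ htS.1 htS.2
    exact iff1.mp (sub_eq_zero.mp (eq_zero_of_quadratic hall))
  · -- the easy direction of the second equivalence
    have hE : ha.sqrt * b * ha.sqrt = hb.sqrt * a * hb.sqrt := iff1.mpr hcomm
    rw [hE]
    field_simp
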